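/- Let n ≥ 1, l ∈ (ℤ∖{0})^n, and 1 ≤ k ≤ n. Let r^{(1)} = l, r^{(2)}, …, r^{(n)} ∈ ℤ^n be linearly independent, and let m^{(1)}, …, m^{(n−k)} ∈ ℤ^n be linearly independent with r^{(i)} · m^{(j)} = 0 for all i = 1,…,k and j = 1,…,n−k. Define F_i = J_{r^{(i)}} for i = 1,…,n and F_{n+j} = Im R_{m^{(j)}} for j = 1,…,n−k. Then {F_i, F_j} = 0 for all i ∈ {1,…,k} and all j ∈ {1,…,2n−k}, and the 2n−k functions F_1, …, F_{2n−k} are functionally independent; i.e. F^{(k)} = (F_1,…,F_{2n−k}) is an integrable set with the k central elements (J_{r^{(1)}}, …, J_{r^{(k)}}). -/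

import Mathlib

noncomputable section

open Complex

/-- Phase space `ℝ^{2n}`: a point is a pair `(x, p)` of vectors in `ℝ^n`. -/
abbrev Phase (n : ℕ) : Type := (Fin n → ℝ) × (Fin n → ℝ)

/-- Poisson bracket of complex-valued functions on phase space:
`{f,g} = ∑ j (∂f/∂p_j ∂g/∂x_j − ∂f/∂x_j ∂g/∂p_j)`. -/
def pb {n : ℕ} (f g : Phase n → ℂ) : Phase n → ℂ := fun w =>
  ∑ j : Fin n,
    (fderiv ℝ f w ((0 : Fin n → ℝ), Pi.single j (1 : ℝ)) *
        fderiv ℝ g w (Pi.single j (1 : ℝ), (0 : Fin n → ℝ)) -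
      fderiv ℝ f w (Pi.single j (1 : ℝ), (0 : Fin n → ℝ)) *
        fderiv ℝ g w ((0 : Fin n → ℝ), Pi.single j (1 : ℝ)))

/-- Poisson bracket of real-valued functions on phase space. -/
def pbR {n : ℕ} (f g : Phase n → ℝ) : Phase n → ℝ := fun w =>
  ∑ j : Fin n,
    (fderiv ℝ f w ((0 : Fin n → ℝ), Pi.single j (1 : ℝ)) *
        fderiv ℝ g w (Pi.single j (1 : ℝ), (0 : Fin n → ℝ)) -
      fderiv ℝ f w (Pi.single j (1 : ℝ), (0 : Fin n → ℝ)) *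
        fderiv ℝ g w ((0 : Fin n → ℝ), Pi.single j (1 : ℝ)))

/-- `z_j = (x_j + i p_j)/√2`. -/
def zf {n : ℕ} (j : Fin n) (w : Phase n) : ℂ :=
  ((w.1 j : ℂ) + Complex.I * (w.2 j : ℂ)) / ((Real.sqrt 2 : ℝ) : ℂ)

/-- `z̄_j = (x_j − i p_j)/√2`. -/
def zbf {n : ℕ} (j : Fin n) (w : Phase n) : ℂ :=
  ((w.1 j : ℂ) - Complex.I * (w.2 j : ℂ)) / ((Real.sqrt 2 : ℝ) : ℂ)

/-- `I_j = z_j z̄_j` (complex-valued; its values are real). -/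
def Iact {n : ℕ} (j : Fin n) (w : Phase n) : ℂ := zf j w * zbf j w

/-- `I_j = (x_j² + p_j²)/2` (real-valued). -/
def IR {n : ℕ} (j : Fin n) (w : Phase n) : ℝ := (w.1 j ^ 2 + w.2 j ^ 2) / 2

/-- A family of real functions on phase space is functionally independent if their
differentials are linearly independent at every point of some dense open set. -/
def FunctionallyIndependent {n : ℕ} {ι : Type*} (f : ι → Phase n → ℝ) : Prop :=
  ∃ U : Set (Phase n), IsOpen U ∧ Dense U ∧
    ∀ w ∈ U, LinearIndependent ℝ (fun i => fderiv ℝ (f i) w)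

/-- The monomial `P_{a,b} = ∏_j z_j^{a_j} z̄_j^{b_j}`. -/
def Pab {n : ℕ} (a b : Fin n → ℕ) (w : Phase n) : ℂ :=
  ∏ j : Fin n, zf j w ^ a j * zbf j w ^ b j

/-- `R_m = ∏_j ζ_j^{m_j}`, with `ζ_j^{m_j} = z_j^{m_j}` for `m_j ≥ 0` and
`ζ_j^{m_j} = z̄_j^{−m_j}` for `m_j < 0`. -/
def Rm {n : ℕ} (m : Fin n → ℤ) (w : Phase n) : ℂ :=
  ∏ j : Fin n, if 0 ≤ m j then zf j w ^ (m j).toNat else zbf j w ^ (-(m j)).toNat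

/-- `w_i = z_i` if `ε_i = 1`, `w_i = z̄_i` if `ε_i = −1`. -/
def wfun {n : ℕ} (ε : Fin n → ℤ) (i : Fin n) (w : Phase n) : ℂ :=
  if ε i = 1 then zf i w else zbf i w

/-- `w̄_i`, the complex conjugate of `w_i`. -/
def wbfun {n : ℕ} (ε : Fin n → ℤ) (i : Fin n) (w : Phase n) : ℂ :=
  if ε i = 1 then zbf i w else zf i w

/-- `P_{ij} = i(w_i w̄_j − w_j w̄_i)` (complex-valued; its values are real). -/
def Pf {n : ℕ} (ε : Fin n → ℤ) (i j : Fin n) (w : Phase n) : ℂ :=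
  Complex.I * (wfun ε i w * wbfun ε j w - wfun ε j w * wbfun ε i w)

/-- `P_{ij}` as a real-valued function. -/
def PfR {n : ℕ} (ε : Fin n → ℤ) (i j : Fin n) (w : Phase n) : ℝ :=
  (Pf ε i j w).re


section AuxLemmas

open ContinuousLinearMap

variable {n : ℕ}

/-- basis tangent vectors -/
def E1 (n : ℕ) (j : Fin n) : Phase n := (Pi.single j 1, 0)
def E2 (n : ℕ) (j : Fin n) : Phase n := (0, Pi.single j 1)

def LX (t : Fin n) : Phase n →L[ℝ] ℝ :=
  (ContinuousLinearMap.proj t).comp (ContinuousLinearMap.fst ℝ (Fin n → ℝ) (Fin n → ℝ))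

def LP (t : Fin n) : Phase n →L[ℝ] ℝ :=
  (ContinuousLinearMap.proj t).comp (ContinuousLinearMap.snd ℝ (Fin n → ℝ) (Fin n → ℝ))

@[simp] lemma LX_apply (t : Fin n) (v : Phase n) : LX t v = v.1 t := rfl
@[simp] lemma LP_apply (t : Fin n) (v : Phase n) : LP t v = v.2 t := rfl

def LZ (t : Fin n) : Phase n →L[ℝ] ℂ :=
  (((Real.sqrt 2 : ℝ) : ℂ))⁻¹ •
    (Complex.ofRealCLM.comp (LX t) + Complex.I • Complex.ofRealCLM.comp (LP t))

def LZb (t : Fin n) : Phase n →L[ℝ] ℂ :=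
  (((Real.sqrt 2 : ℝ) : ℂ))⁻¹ •
    (Complex.ofRealCLM.comp (LX t) - Complex.I • Complex.ofRealCLM.comp (LP t))

lemma LZ_apply (t : Fin n) (v : Phase n) :
    LZ t v = ((v.1 t : ℂ) + Complex.I * (v.2 t : ℂ)) / ((Real.sqrt 2 : ℝ) : ℂ) := by
  simp [LZ, div_eq_inv_mul, smul_eq_mul]
  try ring

lemma LZb_apply (t : Fin n) (v : Phase n) :
    LZb t v = ((v.1 t : ℂ) - Complex.I * (v.2 t : ℂ)) / ((Real.sqrt 2 : ℝ) : ℂ) := by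
  simp [LZb, div_eq_inv_mul, smul_eq_mul]
  try ring

lemma zf_eq (t : Fin n) : zf t = ⇑(LZ t) := by
  funext v; rw [LZ_apply]; rfl

lemma zbf_eq (t : Fin n) : zbf t = ⇑(LZb t) := by
  funext v; rw [LZb_apply]; rfl

lemma hasFDerivAt_zf (t : Fin n) (w : Phase n) : HasFDerivAt (zf t) (LZ t) w := by
  rw [zf_eq]; exact (LZ t).hasFDerivAt

lemma hasFDerivAt_zbf (t : Fin n) (w : Phase n) : HasFDerivAt (zbf t) (LZb t) w := by
  rw [zbf_eq]; exact (LZb t).hasFDerivAt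

lemma hasFDerivAt_npow {A : Type*} [NormedCommRing A] [NormedAlgebra ℝ A]
    {f : Phase n → A} {f' : Phase n →L[ℝ] A} {w : Phase n} (h : HasFDerivAt f f' w) :
    ∀ N : ℕ, HasFDerivAt (fun w => f w ^ N) (((N : A) * f w ^ (N - 1)) • f') w
  | 0 => by
      simp only [pow_zero]
      exact (hasFDerivAt_const (1 : A) w).congr_fderiv (ContinuousLinearMap.ext fun v => by simp)
  | (N + 1) => by
      have h2 := (hasFDerivAt_npow h N).mul h
      have hfun : (fun w => f w ^ (N + 1)) = fun w => f w ^ N * f w := by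
        funext x; rw [pow_succ]
      rw [hfun]
      have hco : ((N + 1 : ℕ) : A) * f w ^ (N + 1 - 1) = f w ^ N + f w * ((N : A) * f w ^ (N - 1)) := by
        cases N with
        | zero => simp
        | succ d =>
            simp only [Nat.add_sub_cancel]
            push_cast
            ring
      refine h2.congr_fderiv (ContinuousLinearMap.ext fun v => ?_)
      simp only [ContinuousLinearMap.add_apply, ContinuousLinearMap.smul_apply, smul_eq_mul]
      rw [hco]; ring

/-- the factor `ζ_t^{m_t}` of `R_m`. -/
def zeta (mm : Fin n → ℤ) (t : Fin n) (w : Phase n) : ℂ :=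
  if 0 ≤ mm t then zf t w ^ (mm t).toNat else zbf t w ^ (-(mm t)).toNat

lemma Rm_eq_prod (mm : Fin n → ℤ) (w : Phase n) : Rm mm w = ∏ t, zeta mm t w := rfl

/-- derivative of `zeta`. -/
def Dzeta (mm : Fin n → ℤ) (t : Fin n) (w : Phase n) : Phase n →L[ℝ] ℂ :=
  if 0 ≤ mm t then (((mm t).toNat : ℂ) * zf t w ^ ((mm t).toNat - 1)) • LZ t
  else ((((-(mm t)).toNat : ℂ)) * zbf t w ^ ((-(mm t)).toNat - 1)) • LZb t

lemma hasFDerivAt_zeta (mm : Fin n → ℤ) (t : Fin n) (w : Phase n) :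
    HasFDerivAt (zeta mm t) (Dzeta mm t w) w := by
  by_cases h : 0 ≤ mm t
  · have hz : zeta mm t = fun w => zf t w ^ (mm t).toNat := by
      funext u; simp [zeta, if_pos h]
    rw [hz]
    simp only [Dzeta, if_pos h]
    exact hasFDerivAt_npow (hasFDerivAt_zf t w) _
  · have hz : zeta mm t = fun w => zbf t w ^ (-(mm t)).toNat := by
      funext u; simp [zeta, if_neg h]
    rw [hz]
    simp only [Dzeta, if_neg h]
    exact hasFDerivAt_npow (hasFDerivAt_zbf t w) _

/-- derivative of `Rm`. -/
def DRm (mm : Fin n → ℤ) (w : Phase n) : Phase n →L[ℝ] ℂ :=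
  ∑ t, (∏ s ∈ Finset.univ.erase t, zeta mm s w) • Dzeta mm t w

lemma hasFDerivAt_Rm (mm : Fin n → ℤ) (w : Phase n) :
    HasFDerivAt (Rm mm) (DRm mm w) w := by
  have h := HasFDerivAt.finset_prod (u := (Finset.univ : Finset (Fin n)))
    (g := fun t => zeta mm t) (g' := fun t => Dzeta mm t w) (x := w)
    (fun t _ => hasFDerivAt_zeta mm t w)
  exact h

/-- square root of two as a nonzero complex number -/
lemma sqrt2C_ne : ((Real.sqrt 2 : ℝ) : ℂ) ≠ 0 := by
  simp only [ne_eq, Complex.ofReal_eq_zero]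
  positivity

lemma LZ_E1 (t j : Fin n) : LZ t (E1 n j) =
    if t = j then 1 / ((Real.sqrt 2 : ℝ) : ℂ) else 0 := by
  rw [LZ_apply]
  split_ifs with h <;> simp [E1, Pi.single_apply, h]

lemma LZ_E2 (t j : Fin n) : LZ t (E2 n j) =
    if t = j then Complex.I / ((Real.sqrt 2 : ℝ) : ℂ) else 0 := by
  rw [LZ_apply]
  split_ifs with h <;> simp [E2, Pi.single_apply, h]

lemma LZb_E1 (t j : Fin n) : LZb t (E1 n j) =
    if t = j then 1 / ((Real.sqrt 2 : ℝ) : ℂ) else 0 := by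
  rw [LZb_apply]
  split_ifs with h <;> simp [E1, Pi.single_apply, h]

lemma LZb_E2 (t j : Fin n) : LZb t (E2 n j) =
    if t = j then -(Complex.I / ((Real.sqrt 2 : ℝ) : ℂ)) else 0 := by
  rw [LZb_apply]
  split_ifs with h <;> simp [E2, Pi.single_apply, h] <;> try ring

/-- rotational combination applied to `LZ`. -/
lemma rot_LZ (t j : Fin n) (w : Phase n) :
    (w.2 j : ℂ) * LZ t (E1 n j) - (w.1 j : ℂ) * LZ t (E2 n j) =
      if t = j then -Complex.I * zf j w else 0 := by
  by_cases h : t = j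
  · subst h
    simp only [LZ_E1, LZ_E2, if_pos rfl, zf, eq_self_iff_true, if_true]
    linear_combination ((w.2 t : ℂ) / ((Real.sqrt 2 : ℝ) : ℂ)) * Complex.I_sq
  · simp [LZ_E1, LZ_E2, h]

lemma rot_LZb (t j : Fin n) (w : Phase n) :
    (w.2 j : ℂ) * LZb t (E1 n j) - (w.1 j : ℂ) * LZb t (E2 n j) =
      if t = j then Complex.I * zbf j w else 0 := by
  by_cases h : t = j
  · subst h
    simp only [LZb_E1, LZb_E2, if_pos rfl, zbf, eq_self_iff_true, if_true]
    linear_combination ((w.2 t : ℂ) / ((Real.sqrt 2 : ℝ) : ℂ)) * Complex.I_sq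
  · simp [LZb_E1, LZb_E2, h]

/-- radial combination applied to `LZ`. -/
lemma rad_LZ (t j : Fin n) (w : Phase n) :
    (w.1 j : ℂ) * LZ t (E1 n j) + (w.2 j : ℂ) * LZ t (E2 n j) =
      if t = j then zf j w else 0 := by
  by_cases h : t = j
  · subst h
    simp only [LZ_E1, LZ_E2, if_pos rfl, zf, eq_self_iff_true, if_true]
    ring
  · simp [LZ_E1, LZ_E2, h]

lemma rad_LZb (t j : Fin n) (w : Phase n) :
    (w.1 j : ℂ) * LZb t (E1 n j) + (w.2 j : ℂ) * LZb t (E2 n j) =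
      if t = j then zbf j w else 0 := by
  by_cases h : t = j
  · subst h
    simp only [LZb_E1, LZb_E2, if_pos rfl, zbf, eq_self_iff_true, if_true]
    ring
  · simp [LZb_E1, LZb_E2, h]

lemma cast_mul_pow_sub_one (z : ℂ) (N : ℕ) :
    (N : ℂ) * z ^ (N - 1) * z = (N : ℂ) * z ^ N := by
  cases N with
  | zero => simp
  | succ d =>
      simp only [Nat.add_sub_cancel]
      rw [pow_succ]
      ring

lemma toNat_cast_of_nonneg {a : ℤ} (h : 0 ≤ a) : ((a.toNat : ℂ)) = (a : ℂ) := by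
  exact_mod_cast congrArg (fun z : ℤ => (z : ℂ)) (Int.toNat_of_nonneg h)

lemma toNat_neg_cast_of_neg {a : ℤ} (h : ¬ 0 ≤ a) : (((-a).toNat : ℂ)) = -(a : ℂ) := by
  have : ((-a).toNat : ℤ) = -a := Int.toNat_of_nonneg (by omega)
  exact_mod_cast congrArg (fun z : ℤ => (z : ℂ)) this

lemma natAbs_cast_eq_toNat_of_nonneg {a : ℤ} (h : 0 ≤ a) :
    ((a.natAbs : ℂ)) = ((a.toNat : ℂ)) := by
  have : (a.natAbs : ℤ) = (a.toNat : ℤ) := by omega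
  exact_mod_cast congrArg (fun z : ℤ => (z : ℂ)) this

lemma natAbs_cast_eq_toNat_of_neg {a : ℤ} (h : ¬ 0 ≤ a) :
    ((a.natAbs : ℂ)) = (((-a).toNat : ℂ)) := by
  have : (a.natAbs : ℤ) = ((-a).toNat : ℤ) := by omega
  exact_mod_cast congrArg (fun z : ℤ => (z : ℂ)) this

lemma rot_Dzeta (mm : Fin n → ℤ) (t j : Fin n) (w : Phase n) :
    (w.2 j : ℂ) * Dzeta mm t w (E1 n j) - (w.1 j : ℂ) * Dzeta mm t w (E2 n j) =
      if t = j then -Complex.I * (mm t : ℂ) * zeta mm t w else 0 := by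
  by_cases h : 0 ≤ mm t
  · simp only [Dzeta, zeta, if_pos h, ContinuousLinearMap.smul_apply, smul_eq_mul]
    have hrw : (w.2 j : ℂ) * (((mm t).toNat : ℂ) * zf t w ^ ((mm t).toNat - 1) * LZ t (E1 n j)) -
        (w.1 j : ℂ) * (((mm t).toNat : ℂ) * zf t w ^ ((mm t).toNat - 1) * LZ t (E2 n j)) =
        (((mm t).toNat : ℂ) * zf t w ^ ((mm t).toNat - 1)) *
          ((w.2 j : ℂ) * LZ t (E1 n j) - (w.1 j : ℂ) * LZ t (E2 n j)) := by ring
    rw [hrw, rot_LZ]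
    by_cases htj : t = j
    · subst htj
      simp only [eq_self_iff_true, if_true]
      rw [← toNat_cast_of_nonneg h]
      linear_combination (-Complex.I) * cast_mul_pow_sub_one (zf t w) (mm t).toNat
    · simp [htj]
  · simp only [Dzeta, zeta, if_neg h, ContinuousLinearMap.smul_apply, smul_eq_mul]
    have hrw : (w.2 j : ℂ) * ((((-(mm t)).toNat : ℂ)) * zbf t w ^ ((-(mm t)).toNat - 1) * LZb t (E1 n j)) -
        (w.1 j : ℂ) * ((((-(mm t)).toNat : ℂ)) * zbf t w ^ ((-(mm t)).toNat - 1) * LZb t (E2 n j)) =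
        ((((-(mm t)).toNat : ℂ)) * zbf t w ^ ((-(mm t)).toNat - 1)) *
          ((w.2 j : ℂ) * LZb t (E1 n j) - (w.1 j : ℂ) * LZb t (E2 n j)) := by ring
    rw [hrw, rot_LZb]
    by_cases htj : t = j
    · subst htj
      simp only [eq_self_iff_true, if_true]
      have hc : ((mm t : ℂ)) = -(((-(mm t)).toNat : ℂ)) := by
        rw [toNat_neg_cast_of_neg h]; ring
      rw [hc]
      linear_combination Complex.I * cast_mul_pow_sub_one (zbf t w) (-(mm t)).toNat
    · simp [htj]

lemma rad_Dzeta (mm : Fin n → ℤ) (t j : Fin n) (w : Phase n) :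
    (w.1 j : ℂ) * Dzeta mm t w (E1 n j) + (w.2 j : ℂ) * Dzeta mm t w (E2 n j) =
      if t = j then ((mm t).natAbs : ℂ) * zeta mm t w else 0 := by
  by_cases h : 0 ≤ mm t
  · simp only [Dzeta, zeta, if_pos h, ContinuousLinearMap.smul_apply, smul_eq_mul]
    have hrw : (w.1 j : ℂ) * (((mm t).toNat : ℂ) * zf t w ^ ((mm t).toNat - 1) * LZ t (E1 n j)) +
        (w.2 j : ℂ) * (((mm t).toNat : ℂ) * zf t w ^ ((mm t).toNat - 1) * LZ t (E2 n j)) =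
        (((mm t).toNat : ℂ) * zf t w ^ ((mm t).toNat - 1)) *
          ((w.1 j : ℂ) * LZ t (E1 n j) + (w.2 j : ℂ) * LZ t (E2 n j)) := by ring
    rw [hrw, rad_LZ]
    by_cases htj : t = j
    · subst htj
      simp only [eq_self_iff_true, if_true]
      rw [natAbs_cast_eq_toNat_of_nonneg h]
      linear_combination cast_mul_pow_sub_one (zf t w) (mm t).toNat
    · simp [htj]
  · simp only [Dzeta, zeta, if_neg h, ContinuousLinearMap.smul_apply, smul_eq_mul]
    have hrw : (w.1 j : ℂ) * ((((-(mm t)).toNat : ℂ)) * zbf t w ^ ((-(mm t)).toNat - 1) * LZb t (E1 n j)) +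
        (w.2 j : ℂ) * ((((-(mm t)).toNat : ℂ)) * zbf t w ^ ((-(mm t)).toNat - 1) * LZb t (E2 n j)) =
        ((((-(mm t)).toNat : ℂ)) * zbf t w ^ ((-(mm t)).toNat - 1)) *
          ((w.1 j : ℂ) * LZb t (E1 n j) + (w.2 j : ℂ) * LZb t (E2 n j)) := by ring
    rw [hrw, rad_LZb]
    by_cases htj : t = j
    · subst htj
      simp only [eq_self_iff_true, if_true]
      rw [natAbs_cast_eq_toNat_of_neg h]
      linear_combination cast_mul_pow_sub_one (zbf t w) (-(mm t)).toNat
    · simp [htj]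

lemma rot_DRm (mm : Fin n → ℤ) (j : Fin n) (w : Phase n) :
    (w.2 j : ℂ) * DRm mm w (E1 n j) - (w.1 j : ℂ) * DRm mm w (E2 n j) =
      -Complex.I * (mm j : ℂ) * Rm mm w := by
  simp only [DRm, ContinuousLinearMap.sum_apply, ContinuousLinearMap.smul_apply, smul_eq_mul,
    Finset.mul_sum, ← Finset.sum_sub_distrib]
  have hterm : ∀ t : Fin n,
      (w.2 j : ℂ) * ((∏ s ∈ Finset.univ.erase t, zeta mm s w) * Dzeta mm t w (E1 n j)) -
      (w.1 j : ℂ) * ((∏ s ∈ Finset.univ.erase t, zeta mm s w) * Dzeta mm t w (E2 n j)) =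
      (∏ s ∈ Finset.univ.erase t, zeta mm s w) *
        (if t = j then -Complex.I * (mm t : ℂ) * zeta mm t w else 0) := by
    intro t
    rw [← rot_Dzeta]
    ring
  rw [Finset.sum_congr rfl (fun t _ => hterm t)]
  simp only [mul_ite, mul_zero]
  rw [Finset.sum_ite_eq' Finset.univ j
    (fun t => (∏ s ∈ Finset.univ.erase t, zeta mm s w) * (-Complex.I * (mm t : ℂ) * zeta mm t w))]
  simp only [Finset.mem_univ, if_true]
  rw [Rm_eq_prod, ← Finset.prod_erase_mul Finset.univ _ (Finset.mem_univ j)]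
  ring

lemma rad_DRm (mm : Fin n → ℤ) (j : Fin n) (w : Phase n) :
    (w.1 j : ℂ) * DRm mm w (E1 n j) + (w.2 j : ℂ) * DRm mm w (E2 n j) =
      ((mm j).natAbs : ℂ) * Rm mm w := by
  simp only [DRm, ContinuousLinearMap.sum_apply, ContinuousLinearMap.smul_apply, smul_eq_mul,
    Finset.mul_sum, ← Finset.sum_add_distrib]
  have hterm : ∀ t : Fin n,
      (w.1 j : ℂ) * ((∏ s ∈ Finset.univ.erase t, zeta mm s w) * Dzeta mm t w (E1 n j)) +
      (w.2 j : ℂ) * ((∏ s ∈ Finset.univ.erase t, zeta mm s w) * Dzeta mm t w (E2 n j)) =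
      (∏ s ∈ Finset.univ.erase t, zeta mm s w) *
        (if t = j then ((mm t).natAbs : ℂ) * zeta mm t w else 0) := by
    intro t
    rw [← rad_Dzeta]
    ring
  rw [Finset.sum_congr rfl (fun t _ => hterm t)]
  simp only [mul_ite, mul_zero]
  rw [Finset.sum_ite_eq' Finset.univ j
    (fun t => (∏ s ∈ Finset.univ.erase t, zeta mm s w) * (((mm t).natAbs : ℂ) * zeta mm t w))]
  simp only [Finset.mem_univ, if_true]
  rw [Rm_eq_prod, ← Finset.prod_erase_mul Finset.univ _ (Finset.mem_univ j)]
  ring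

/-- derivative of the `J` functions. -/
def DJ (rr : Fin n → ℤ) (w : Phase n) : Phase n →L[ℝ] ℝ :=
  ∑ t, (rr t : ℝ) • (w.1 t • LX t + w.2 t • LP t)

lemma hasFDerivAt_IR (t : Fin n) (w : Phase n) :
    HasFDerivAt (IR t) (w.1 t • LX t + w.2 t • LP t) w := by
  have hx : HasFDerivAt (fun w : Phase n => w.1 t) (LX t) w := (LX t).hasFDerivAt
  have hp : HasFDerivAt (fun w : Phase n => w.2 t) (LP t) w := (LP t).hasFDerivAt
  have h2 := ((hasFDerivAt_npow hx 2).add (hasFDerivAt_npow hp 2)).const_mul (1/2 : ℝ)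
  have hfun : IR t = fun w : Phase n => (1/2 : ℝ) * (w.1 t ^ 2 + w.2 t ^ 2) := by
    funext u; simp [IR]; ring
  rw [hfun]
  refine h2.congr_fderiv (ContinuousLinearMap.ext fun v => ?_)
  simp only [ContinuousLinearMap.add_apply, ContinuousLinearMap.smul_apply, smul_eq_mul,
    LX_apply, LP_apply, pow_one]
  ring

lemma hasFDerivAt_J (rr : Fin n → ℤ) (w : Phase n) :
    HasFDerivAt (fun w => ∑ t, (rr t : ℝ) * IR t w) (DJ rr w) w :=
  HasFDerivAt.fun_sum fun t _ => (hasFDerivAt_IR t w).const_mul _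

lemma hasFDerivAt_ImRm (mm : Fin n → ℤ) (w : Phase n) :
    HasFDerivAt (fun w => (Rm mm w).im) (Complex.imCLM.comp (DRm mm w)) w := by
  have h := (Complex.imCLM.hasFDerivAt (x := Rm mm w)).comp w (hasFDerivAt_Rm mm w)
  simpa [Function.comp_def] using h

lemma DJ_apply (rr : Fin n → ℤ) (w v : Phase n) :
    DJ rr w v = ∑ t, (rr t : ℝ) * (w.1 t * v.1 t + w.2 t * v.2 t) := by
  simp [DJ, ContinuousLinearMap.sum_apply, smul_eq_mul]
  exact Finset.sum_congr rfl fun t _ => by ring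

lemma DJ_E1 (rr : Fin n → ℤ) (w : Phase n) (j : Fin n) :
    DJ rr w (E1 n j) = (rr j : ℝ) * w.1 j := by
  rw [DJ_apply]
  rw [Finset.sum_eq_single j]
  · simp [E1]
  · intro t _ htj
    simp [E1, Pi.single_apply, htj]
  · intro h; exact absurd (Finset.mem_univ j) h

lemma DJ_E2 (rr : Fin n → ℤ) (w : Phase n) (j : Fin n) :
    DJ rr w (E2 n j) = (rr j : ℝ) * w.2 j := by
  rw [DJ_apply]
  rw [Finset.sum_eq_single j]
  · simp [E2]
  · intro t _ htj
    simp [E2, Pi.single_apply, htj]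
  · intro h; exact absurd (Finset.mem_univ j) h

/-- radial tangent vector at `w` in the `t`-th plane -/
def Urad (w : Phase n) (t : Fin n) : Phase n := (Pi.single t (w.1 t), Pi.single t (w.2 t))

/-- rotational tangent vector at `w` in the `t`-th plane -/
def Vrot (w : Phase n) (t : Fin n) : Phase n := (Pi.single t (-(w.2 t)), Pi.single t (w.1 t))

lemma Urad_eq (w : Phase n) (t : Fin n) :
    Urad w t = w.1 t • E1 n t + w.2 t • E2 n t := by
  unfold Urad E1 E2
  refine Prod.ext ?_ ?_ <;> funext s <;>
    simp [Pi.single_apply, mul_ite]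

lemma Vrot_eq (w : Phase n) (t : Fin n) :
    Vrot w t = (-(w.2 t)) • E1 n t + w.1 t • E2 n t := by
  unfold Vrot E1 E2
  refine Prod.ext ?_ ?_ <;> funext s <;>
    simp [Pi.single_apply, mul_ite] <;>
    split_ifs <;> simp

lemma clm_apply_Urad (g : Phase n →L[ℝ] ℂ) (w : Phase n) (t : Fin n) :
    g (Urad w t) = (w.1 t : ℂ) * g (E1 n t) + (w.2 t : ℂ) * g (E2 n t) := by
  rw [Urad_eq, map_add, map_smul, map_smul]
  simp [Complex.real_smul]

lemma clm_apply_Vrot (g : Phase n →L[ℝ] ℂ) (w : Phase n) (t : Fin n) :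
    g (Vrot w t) = -((w.2 t : ℂ) * g (E1 n t)) + (w.1 t : ℂ) * g (E2 n t) := by
  rw [Vrot_eq, map_add, map_smul, map_smul]
  simp [Complex.real_smul]

lemma DRm_Urad (mm : Fin n → ℤ) (w : Phase n) (t : Fin n) :
    DRm mm w (Urad w t) = ((mm t).natAbs : ℂ) * Rm mm w := by
  rw [clm_apply_Urad, rad_DRm]

lemma DRm_Vrot (mm : Fin n → ℤ) (w : Phase n) (t : Fin n) :
    DRm mm w (Vrot w t) = Complex.I * (mm t : ℂ) * Rm mm w := by
  rw [clm_apply_Vrot]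
  have h := rot_DRm mm t w
  linear_combination -h

lemma DJ_Urad (rr : Fin n → ℤ) (w : Phase n) (t : Fin n) :
    DJ rr w (Urad w t) = (rr t : ℝ) * (2 * IR t w) := by
  rw [DJ_apply]
  rw [Finset.sum_eq_single t]
  · simp only [Urad, Pi.single_eq_same, IR]
    ring
  · intro s _ hst
    simp [Urad, Pi.single_apply, hst]
  · intro h; exact absurd (Finset.mem_univ t) h

lemma DJ_Vrot (rr : Fin n → ℤ) (w : Phase n) (t : Fin n) :
    DJ rr w (Vrot w t) = 0 := by
  rw [DJ_apply]
  rw [Finset.sum_eq_zero]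
  intro s _
  by_cases hst : s = t
  · subst hst
    simp only [Vrot, Pi.single_eq_same]
    ring
  · simp [Vrot, Pi.single_apply, hst]

/-- Integer-linearly-independent integer vectors are linearly independent over `ℝ`. -/
lemma linIndep_int_to_real {s : ℕ} (v : Fin s → Fin n → ℤ) (hv : LinearIndependent ℤ v) :
    LinearIndependent ℝ (fun i => fun t => ((v i t : ℝ))) := by
  classical
  -- step 1: over ℚ
  let f : (Fin n → ℤ) →ₗ[ℤ] (Fin n → ℚ) :=
    { toFun := fun x t => ((x t : ℚ))
      map_add' := by
        intro x y; funext t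
        simp only [Pi.add_apply]
        push_cast; ring
      map_smul' := by
        intro c x; funext t
        simp only [Pi.smul_apply, zsmul_eq_mul, RingHom.id_apply]
        push_cast; ring }
  have hker : LinearMap.ker f = ⊥ := by
    rw [LinearMap.ker_eq_bot']
    intro x hx
    funext t
    have hxt : ((x t : ℚ)) = 0 := congrFun hx t
    exact_mod_cast hxt
  have h1 : LinearIndependent ℤ (fun i => fun t => ((v i t : ℚ))) := by
    have := hv.map' f hker
    exact this
  have h2 : LinearIndependent ℚ (fun i => fun t => ((v i t : ℚ))) :=
    (LinearIndependent.iff_fractionRing ℤ ℚ).mp h1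
  -- step 2: over ℝ via a left inverse matrix
  rw [Fintype.linearIndependent_iff]
  intro c hc
  set M : Matrix (Fin n) (Fin s) ℚ := Matrix.of (fun t i => ((v i t : ℚ))) with hM
  have hMker : LinearMap.ker (Matrix.toLin' M) = ⊥ := by
    rw [LinearMap.ker_eq_bot']
    intro d hd
    have hd' := Fintype.linearIndependent_iff.mp h2 d
    have hsum : ∑ i, d i • (fun t => ((v i t : ℚ))) = 0 := by
      funext t
      have := congrFun hd t
      simp only [Matrix.toLin'_apply, Matrix.mulVec, dotProduct, hM, Matrix.of_apply,
        Pi.zero_apply] at this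
      simp only [Finset.sum_apply, Pi.smul_apply, smul_eq_mul, Pi.zero_apply]
      rw [← this]
      exact Finset.sum_congr rfl fun i _ => by ring
    funext i
    exact hd' hsum i
  obtain ⟨g, hg⟩ := (Matrix.toLin' M).exists_leftInverse_of_injective hMker
  set A : Matrix (Fin s) (Fin n) ℚ := LinearMap.toMatrix' g with hA
  have hAM : A * M = 1 := by
    have := congrArg LinearMap.toMatrix' hg
    rwa [LinearMap.toMatrix'_comp, LinearMap.toMatrix'_toLin', LinearMap.toMatrix'_id] at this
  set Mr : Matrix (Fin n) (Fin s) ℝ := M.map (fun q : ℚ => (q : ℝ)) with hMr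
  set Ar : Matrix (Fin s) (Fin n) ℝ := A.map (fun q : ℚ => (q : ℝ)) with hAr
  have hAMr : Ar * Mr = 1 := by
    have hmap : (A * M).map ((Rat.castHom ℝ) : ℚ →+* ℝ) = Ar * Mr := by
      rw [Matrix.map_mul]
      rfl
    rw [hAM] at hmap
    rw [← hmap]
    ext i j
    simp [Matrix.one_apply, apply_ite]
  have hMc : Mr.mulVec c = 0 := by
    funext t
    have := congrFun hc t
    simp only [Finset.sum_apply, Pi.smul_apply, smul_eq_mul, Pi.zero_apply] at this
    simp only [Matrix.mulVec, dotProduct, hMr, hM, Matrix.map_apply, Matrix.of_apply,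
      Pi.zero_apply]
    rw [← this]
    refine Finset.sum_congr rfl fun i _ => ?_
    push_cast
    ring
  have hc0 : c = 0 := by
    calc c = (Ar * Mr).mulVec c := by rw [hAMr, Matrix.one_mulVec]
    _ = Ar.mulVec (Mr.mulVec c) := by rw [← Matrix.mulVec_mulVec]
    _ = 0 := by rw [hMc, Matrix.mulVec_zero]
  intro i
  exact congrFun hc0 i

lemma analyticAt_zf (t : Fin n) (w : Phase n) : AnalyticAt ℝ (zf t) w := by
  rw [zf_eq]; exact (LZ t).analyticAt w

lemma analyticAt_zbf (t : Fin n) (w : Phase n) : AnalyticAt ℝ (zbf t) w := by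
  rw [zbf_eq]; exact (LZb t).analyticAt w

lemma analyticAt_zeta (mm : Fin n → ℤ) (t : Fin n) (w : Phase n) :
    AnalyticAt ℝ (zeta mm t) w := by
  by_cases h : 0 ≤ mm t
  · have hz : zeta mm t = fun w => zf t w ^ (mm t).toNat := by
      funext u; simp [zeta, if_pos h]
    rw [hz]
    exact (analyticAt_zf t w).pow _
  · have hz : zeta mm t = fun w => zbf t w ^ (-(mm t)).toNat := by
      funext u; simp [zeta, if_neg h]
    rw [hz]
    exact (analyticAt_zbf t w).pow _

lemma analyticAt_Rm (mm : Fin n → ℤ) (w : Phase n) : AnalyticAt ℝ (Rm mm) w := by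
  have h := Finset.analyticAt_fun_prod (Finset.univ : Finset (Fin n))
    (f := fun t => zeta mm t) (fun t _ => analyticAt_zeta mm t w)
  exact h

lemma analyticAt_ReRm (mm : Fin n → ℤ) (w : Phase n) :
    AnalyticAt ℝ (fun w => (Rm mm w).re) w := by
  have h := (Complex.reCLM.analyticAt (Rm mm w)).comp (analyticAt_Rm mm w)
  simpa [Function.comp_def] using h

lemma analyticAt_IR (t : Fin n) (w : Phase n) : AnalyticAt ℝ (IR t) w := by
  have hfun : IR t = fun w : Phase n => (w.1 t ^ 2 + w.2 t ^ 2) * (2 : ℝ)⁻¹ := by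
    funext u; simp [IR, div_eq_mul_inv]
  rw [hfun]
  have hx : AnalyticAt ℝ (fun w : Phase n => w.1 t) w := (LX t).analyticAt w
  have hp : AnalyticAt ℝ (fun w : Phase n => w.2 t) w := (LP t).analyticAt w
  exact ((hx.pow 2).add (hp.pow 2)).mul analyticAt_const

/-- the set where an analytic function is nonzero is dense, provided the function is
somewhere nonzero. -/
lemma dense_ne_zero {f : Phase n → ℝ} (hf : ∀ x, AnalyticAt ℝ f x) {w₀ : Phase n}
    (h0 : f w₀ ≠ 0) : Dense {w | f w ≠ 0} := by
  rw [dense_iff_inter_open]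
  rintro V hV ⟨v, hv⟩
  by_contra hempty
  have hzero : ∀ u ∈ V, f u = 0 := by
    intro u hu
    by_contra hne
    exact hempty ⟨u, hu, hne⟩
  have hev : f =ᶠ[nhds v] 0 := Filter.eventually_of_mem (hV.mem_nhds hv) hzero
  have heq : Set.EqOn f 0 Set.univ :=
    AnalyticOnNhd.eqOn_zero_of_preconnected_of_eventuallyEq_zero
      (fun x _ => hf x) isPreconnected_univ (Set.mem_univ v) hev
  exact h0 (heq (Set.mem_univ w₀))

/-- base point where everything is nonzero -/
def basePt (n : ℕ) : Phase n := (fun _ => Real.sqrt 2, fun _ => 0)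

lemma zf_basePt (t : Fin n) : zf t (basePt n) = 1 := by
  simp [zf, basePt]

lemma zbf_basePt (t : Fin n) : zbf t (basePt n) = 1 := by
  simp [zbf, basePt]

lemma Rm_basePt (mm : Fin n → ℤ) : Rm mm (basePt n) = 1 := by
  rw [Rm_eq_prod]
  rw [Finset.prod_eq_one]
  intro t _
  unfold zeta
  split_ifs <;> simp [zf_basePt, zbf_basePt]

lemma IR_basePt (t : Fin n) : IR t (basePt n) = 1 := by
  simp [IR, basePt, Real.sq_sqrt]

lemma im_I_intMul (a : ℤ) (z : ℂ) : (Complex.I * (a : ℂ) * z).im = (a : ℝ) * z.re := by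
  simp [Complex.mul_im, Complex.mul_re]

lemma im_negI_intMul (a : ℤ) (z : ℂ) :
    (-Complex.I * (a : ℂ) * z).im = -((a : ℝ) * z.re) := by
  simp [Complex.mul_im, Complex.mul_re]

end AuxLemmas

/-- the functions `F_i = J_{r^{(i)}}` (`i = 1,…,n`) and
`F_{n+j} = Im R_{m^{(j)}}` (`j = 1,…,n−k`) form an integrable set of `2n−k` functions
whose `k` central elements are `J_{r^{(1)}}, …, J_{r^{(k)}}`. -/
theorem statement4 (n k : ℕ) (hn : 1 ≤ n) (hk1 : 1 ≤ k) (hk2 : k ≤ n)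
    (l : Fin n → ℤ) (hl : ∀ j, l j ≠ 0)
    (r : Fin n → Fin n → ℤ) (hr : LinearIndependent ℤ r)
    (hr0 : r ⟨0, by omega⟩ = l)
    (m : Fin (n - k) → Fin n → ℤ) (hm : LinearIndependent ℤ m)
    (horth : ∀ i : Fin n, (i : ℕ) < k → ∀ j : Fin (n - k), ∑ t : Fin n, r i t * m j t = 0)
    (F : Fin n ⊕ Fin (n - k) → Phase n → ℝ)
    (hF : F = Sum.elim (fun i w => ∑ t : Fin n, (r i t : ℝ) * IR t w)
      (fun j w => (Rm (m j) w).im)) :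
    (∀ i : Fin n, (i : ℕ) < k → ∀ s : Fin n ⊕ Fin (n - k), pbR (F (Sum.inl i)) (F s) = 0) ∧
    FunctionallyIndependent F := by
  subst hF
  have hJfd : ∀ (rr : Fin n → ℤ) (w : Phase n),
      fderiv ℝ (fun w => ∑ t, (rr t : ℝ) * IR t w) w = DJ rr w :=
    fun rr w => (hasFDerivAt_J rr w).fderiv
  have hIfd : ∀ (mm : Fin n → ℤ) (w : Phase n),
      fderiv ℝ (fun w => (Rm mm w).im) w = Complex.imCLM.comp (DRm mm w) :=
    fun mm w => (hasFDerivAt_ImRm mm w).fderiv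
  constructor
  · -- Poisson brackets vanish
    intro i hik s
    funext w
    cases s with
    | inl i' =>
        simp only [Sum.elim_inl, pbR, Pi.zero_apply]
        refine Finset.sum_eq_zero fun j _ => ?_
        have e1 : ((Pi.single j (1 : ℝ), (0 : Fin n → ℝ)) : Phase n) = E1 n j := rfl
        have e2 : (((0 : Fin n → ℝ), Pi.single j (1 : ℝ)) : Phase n) = E2 n j := rfl
        simp only [hJfd, e1, e2, DJ_E1, DJ_E2]
        ring
    | inr j' =>
        simp only [Sum.elim_inl, Sum.elim_inr, pbR, Pi.zero_apply]
        have key : ∀ j : Fin n,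
            fderiv ℝ (fun w => ∑ t, (r i t : ℝ) * IR t w) w (E2 n j) *
              fderiv ℝ (fun w => (Rm (m j') w).im) w (E1 n j) -
            fderiv ℝ (fun w => ∑ t, (r i t : ℝ) * IR t w) w (E1 n j) *
              fderiv ℝ (fun w => (Rm (m j') w).im) w (E2 n j) =
            (r i j : ℝ) * (m j' j : ℝ) * (-(Rm (m j') w).re) := by
          intro j
          rw [hJfd, hIfd, DJ_E1, DJ_E2]
          simp only [ContinuousLinearMap.comp_apply, Complex.imCLM_apply]
          set A := DRm (m j') w (E1 n j) with hA
          set B := DRm (m j') w (E2 n j) with hB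
          have h := rot_DRm (m j') j w
          have hsub : ((w.2 j : ℂ) * A - (w.1 j : ℂ) * B).im
              = w.2 j * A.im - w.1 j * B.im := by
            simp [Complex.sub_im, Complex.mul_im]
          have hrhs : (-Complex.I * ((m j' j : ℤ) : ℂ) * Rm (m j') w).im
              = -((m j' j : ℝ) * (Rm (m j') w).re) := im_negI_intMul _ _
          have him : w.2 j * A.im - w.1 j * B.im
              = -((m j' j : ℝ) * (Rm (m j') w).re) := by
            rw [← hsub, h, hrhs]
          linear_combination (r i j : ℝ) * him
        have hsum : (∑ j : Fin n,
            (fderiv ℝ (fun w => ∑ t, (r i t : ℝ) * IR t w) w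
                ((0 : Fin n → ℝ), Pi.single j (1 : ℝ)) *
              fderiv ℝ (fun w => (Rm (m j') w).im) w (Pi.single j (1 : ℝ), (0 : Fin n → ℝ)) -
            fderiv ℝ (fun w => ∑ t, (r i t : ℝ) * IR t w) w
                (Pi.single j (1 : ℝ), (0 : Fin n → ℝ)) *
              fderiv ℝ (fun w => (Rm (m j') w).im) w ((0 : Fin n → ℝ), Pi.single j (1 : ℝ)))) =
            ∑ j : Fin n, (r i j : ℝ) * (m j' j : ℝ) * (-(Rm (m j') w).re) :=
          Finset.sum_congr rfl fun j _ => key j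
        rw [hsum, ← Finset.sum_mul]
        have hz : (∑ j : Fin n, (r i j : ℝ) * (m j' j : ℝ)) = 0 := by
          have h0 := horth i hik j'
          have h1 : ((∑ t : Fin n, r i t * m j' t : ℤ) : ℝ) = 0 := by rw [h0]; simp
          push_cast at h1
          exact h1
        rw [hz, zero_mul]
  · -- functional independence
    refine ⟨{w | (∏ t, IR t w) * ∏ j, (Rm (m j) w).re ≠ 0}, ?_, ?_, ?_⟩
    · have hcont : Continuous (fun w => (∏ t, IR t w) * ∏ j, (Rm (m j) w).re) := by
        rw [continuous_iff_continuousAt]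
        intro x
        exact (((Finset.analyticAt_fun_prod Finset.univ fun t _ => analyticAt_IR t x).mul
          (Finset.analyticAt_fun_prod Finset.univ fun j _ => analyticAt_ReRm (m j) x))).continuousAt
      exact isOpen_compl_singleton.preimage hcont
    · refine dense_ne_zero ?_ (w₀ := basePt n) ?_
      · intro x
        exact ((Finset.analyticAt_fun_prod Finset.univ fun t _ => analyticAt_IR t x).mul
          (Finset.analyticAt_fun_prod Finset.univ fun j _ => analyticAt_ReRm (m j) x))
      · simp [IR_basePt, Rm_basePt]
    · intro w hw
      have hw' := mul_ne_zero_iff.mp hw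
      have hIRw : ∀ t, IR t w ≠ 0 := fun t =>
        Finset.prod_ne_zero_iff.mp hw'.1 t (Finset.mem_univ t)
      have hRew : ∀ j, (Rm (m j) w).re ≠ 0 := fun j =>
        Finset.prod_ne_zero_iff.mp hw'.2 j (Finset.mem_univ j)
      have hfd : (fun s => fderiv ℝ
          (Sum.elim (fun i w => ∑ t : Fin n, (r i t : ℝ) * IR t w)
            (fun j w => (Rm (m j) w).im) s) w) =
          Sum.elim (fun i => DJ (r i) w) (fun j => Complex.imCLM.comp (DRm (m j) w)) := by
        funext s
        cases s with
        | inl i => simpa only [Sum.elim_inl] using hJfd (r i) w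
        | inr j => simpa only [Sum.elim_inr] using hIfd (m j) w
      rw [hfd, Fintype.linearIndependent_iff]
      intro c hc
      have happ : ∀ v : Phase n,
          (∑ i, c (Sum.inl i) * DJ (r i) w v) +
            ∑ j, c (Sum.inr j) * (DRm (m j) w v).im = 0 := by
        intro v
        have h0 := congrArg (fun (L : Phase n →L[ℝ] ℝ) => L v) hc
        simpa [ContinuousLinearMap.sum_apply, ContinuousLinearMap.coe_smul', Pi.smul_apply,
          smul_eq_mul, Fintype.sum_sum_type, Sum.elim_inl, Sum.elim_inr,
          ContinuousLinearMap.comp_apply, Complex.imCLM_apply] using h0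
      -- the inr coefficients vanish
      have hcr : ∀ j, c (Sum.inr j) = 0 := by
        have hv : ∀ t : Fin n,
            ∑ j, (c (Sum.inr j) * (Rm (m j) w).re) * (m j t : ℝ) = 0 := by
          intro t
          have h0 := happ (Vrot w t)
          simp only [DJ_Vrot, mul_zero, Finset.sum_const_zero, zero_add, DRm_Vrot,
            im_I_intMul] at h0
          rw [← h0]
          exact Finset.sum_congr rfl fun j _ => by ring
        have hd := Fintype.linearIndependent_iff.mp (linIndep_int_to_real m hm)
          (fun j => c (Sum.inr j) * (Rm (m j) w).re) ?_
        · intro j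
          have := hd j
          rcases mul_eq_zero.mp this with h | h
          · exact h
          · exact absurd h (hRew j)
        · funext t
          simp only [Finset.sum_apply, Pi.smul_apply, smul_eq_mul, Pi.zero_apply]
          exact hv t
      -- the inl coefficients vanish
      have hcl : ∀ i, c (Sum.inl i) = 0 := by
        have hu : ∀ t : Fin n,
            (∑ i, c (Sum.inl i) * (r i t : ℝ)) * (2 * IR t w) = 0 := by
          intro t
          have h0 := happ (Urad w t)
          simp only [hcr, zero_mul, Finset.sum_const_zero, add_zero, DJ_Urad] at h0
          rw [← h0, Finset.sum_mul]
          exact Finset.sum_congr rfl fun i _ => by ring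
        have hsum0 : ∀ t : Fin n, (∑ i, c (Sum.inl i) * (r i t : ℝ)) = 0 := by
          intro t
          rcases mul_eq_zero.mp (hu t) with h | h
          · exact h
          · exact absurd h (mul_ne_zero two_ne_zero (hIRw t))
        have hd := Fintype.linearIndependent_iff.mp (linIndep_int_to_real r hr)
          (fun i => c (Sum.inl i)) ?_
        · exact hd
        · funext t
          simp only [Finset.sum_apply, Pi.smul_apply, smul_eq_mul, Pi.zero_apply]
          exact hsum0 t
      intro s
      cases s with
      | inl i => exact hcl i
      | inr j => exact hcr j

end
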